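/- Let p be a prime number and let M be an abelian group on which multiplication by p is bijective (equivalently, M is a module over ℤ[1/p]). Then M = 0 if and only if for every prime number ℓ ≠ p the tensor product M ⊗_ℤ W(𝔽̄_ℓ) is zero, where W(𝔽̄_ℓ) denotes the ring of p-typical Witt vectors with coefficients in an algebraic closure of the field with ℓ elements (i.e., WittVector ℓ (AlgebraicClosure (ZMod ℓ))). -/

import Mathlib

open TensorProduct

section Helpers

/-- A tensor product with a subsingleton left factor is subsingleton. -/
lemma subsingleton_tensor_left {A B : Type*} [AddCommGroup A] [AddCommGroup B]
    [Subsingleton A] : Subsingleton (A ⊗[ℤ] B) := by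
  have hz : ∀ z : A ⊗[ℤ] B, z = 0 := fun z => by
    induction z using TensorProduct.induction_on with
    | zero => rfl
    | tmul a b => rw [Subsingleton.elim a 0, TensorProduct.zero_tmul]
    | add x y hx hy => rw [hx, hy, add_zero]
  exact ⟨fun a b => (hz a).trans (hz b).symm⟩

variable (q : ℕ) [hq : Fact q.Prime] (k : Type*) [Field k] [CharP k q]

/-- The Witt vectors over a field of characteristic `q` form a ring of characteristic zero. -/
lemma witt_intCast_ne_zero : ∀ n : ℤ, n ≠ 0 → (n : WittVector q k) ≠ 0 := by
  have key : ∀ m : ℕ, ∀ n : ℤ, n.natAbs = m → n ≠ 0 → (n : WittVector q k) ≠ 0 := by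
    intro m
    induction m using Nat.strong_induction_on with
    | _ m IH =>
      intro n hm hn
      by_cases hdvd : (q : ℤ) ∣ n
      · obtain ⟨c, rfl⟩ := hdvd
        have hc : c ≠ 0 := by rintro rfl; simp at hn
        have h2 : 2 ≤ q := hq.out.two_le
        have hcpos : 0 < c.natAbs := Int.natAbs_pos.mpr hc
        have hlt : c.natAbs < m := by
          subst hm
          rw [Int.natAbs_mul, Int.natAbs_natCast]
          nlinarith
        have hq0 : ((q : ℤ) : WittVector q k) ≠ 0 := by
          exact_mod_cast WittVector.p_nonzero q k
        push_cast
        exact mul_ne_zero hq0 (IH _ hlt c rfl hc)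
      · intro h0
        have hcc := congrArg (WittVector.constantCoeff (p := q)) h0
        rw [map_intCast, map_zero] at hcc
        exact hdvd ((CharP.intCast_eq_zero_iff k q n).mp hcc)
  exact fun n => key n.natAbs n rfl

/-- The Witt vectors over a field of characteristic `q` are flat as a `ℤ`-module. -/
lemma witt_flat : Module.Flat ℤ (WittVector q k) := by
  set W := WittVector q k with hW
  rw [Module.Flat.iff_rTensor_injective']
  intro I
  obtain ⟨n, rfl⟩ : ∃ n : ℤ, I = Ideal.span {n} :=
    ⟨_, (Ideal.span_singleton_generator I).symm⟩
  by_cases hn : n = 0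
  · subst hn
    have hbot : Ideal.span {(0 : ℤ)} = ⊥ := by simp
    rw [hbot]
    haveI : Subsingleton (⊥ : Ideal ℤ) :=
      ⟨fun a b => Subtype.ext (by
        have ha := a.2; have hb := b.2
        rw [Submodule.mem_bot] at ha hb
        rw [ha, hb])⟩
    haveI : Subsingleton ((⊥ : Ideal ℤ) ⊗[ℤ] W) := subsingleton_tensor_left
    exact fun a b _ => Subsingleton.elim a b
  · set I := Ideal.span {n} with hI
    have hnI : n ∈ I := Ideal.subset_span rfl
    set g : ℤ →ₗ[ℤ] I := LinearMap.toSpanSingleton ℤ I ⟨n, hnI⟩ with hg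
    have hgsurj : Function.Surjective g := by
      rintro ⟨y, hy⟩
      rw [hI, Ideal.mem_span_singleton] at hy
      obtain ⟨c, rfl⟩ := hy
      exact ⟨c, Subtype.ext (by simp [hg, LinearMap.toSpanSingleton_apply, smul_eq_mul, mul_comm])⟩
    have hginj : Function.Injective g := by
      intro a b hab
      have : a * n = b * n := by
        have := congrArg (Subtype.val) hab
        simpa [hg, LinearMap.toSpanSingleton_apply, smul_eq_mul] using this
      exact mul_right_cancel₀ hn this
    -- the composite `I.subtype ∘ g` is multiplication by `n`
    have hcomp : (I.subtype ∘ₗ g) = n • (LinearMap.id : ℤ →ₗ[ℤ] ℤ) := by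
      ext
      simp [hg, LinearMap.toSpanSingleton_apply, smul_eq_mul, mul_comm]
    -- surjectivity of `rTensor W g`
    have hTsurj : Function.Surjective (LinearMap.rTensor W g) := by
      intro z
      induction z using TensorProduct.induction_on with
      | zero => exact ⟨0, map_zero _⟩
      | tmul y w =>
        obtain ⟨x, hx⟩ := hgsurj y
        exact ⟨x ⊗ₜ w, by rw [LinearMap.rTensor_tmul, hx]⟩
      | add u v hu hv =>
        obtain ⟨a, rfl⟩ := hu; obtain ⟨b, rfl⟩ := hv
        exact ⟨a + b, map_add _ _ _⟩
    -- injectivity of multiplication by `n` on `ℤ ⊗ W`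
    have hsmul : Function.Injective (fun z : ℤ ⊗[ℤ] W => n • z) := by
      intro a b hab
      have h1 := congrArg (TensorProduct.lid ℤ W) hab
      simp only [map_smul] at h1
      have h2 : ((n : W)) * (TensorProduct.lid ℤ W a) = (n : W) * (TensorProduct.lid ℤ W b) := by
        rw [← zsmul_eq_mul, ← zsmul_eq_mul]; exact ((TensorProduct.lid ℤ W).map_smul n a).symm.trans (h1.trans ((TensorProduct.lid ℤ W).map_smul n b))
      have h3 := mul_left_cancel₀ (witt_intCast_ne_zero q k n hn) h2
      exact (TensorProduct.lid ℤ W).injective h3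
    -- injectivity of the composite
    have hFinj : Function.Injective (LinearMap.rTensor W (I.subtype ∘ₗ g)) := by
      rw [hcomp]
      have : ∀ z : ℤ ⊗[ℤ] W,
          LinearMap.rTensor W (n • (LinearMap.id : ℤ →ₗ[ℤ] ℤ)) z = n • z := by
        intro z
        induction z using TensorProduct.induction_on with
        | zero => simp
        | tmul x w => simp [TensorProduct.smul_tmul']
        | add u v hu hv => rw [map_add, hu, hv, smul_add]
      intro a b hab
      rw [this, this] at hab
      exact hsmul hab
    intro a b hab
    obtain ⟨a', rfl⟩ := hTsurj a
    obtain ⟨b', rfl⟩ := hTsurj b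
    have : LinearMap.rTensor W (I.subtype ∘ₗ g) a' = LinearMap.rTensor W (I.subtype ∘ₗ g) b' := by
      rw [LinearMap.rTensor_comp, LinearMap.coe_comp, Function.comp_apply, Function.comp_apply]
      exact hab
    rw [hFinj this]

end Helpers

/-- Let `p` be a prime and `M` an abelian group on which multiplication
by `p` is bijective (i.e. `M` is a `ℤ[1/p]`-module). Then `M = 0` if and only if for
every prime `ℓ ≠ p` the tensor product `M ⊗_ℤ W(𝔽̄_ℓ)` vanishes, where `W(𝔽̄_ℓ)` is the
ring of Witt vectors with coefficients in an algebraic closure of `𝔽_ℓ`. -/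
theorem stmt8 (p : ℕ) (hp : p.Prime) (M : Type*) [AddCommGroup M]
    (hdiv : Function.Bijective (fun x : M => p • x)) :
    Subsingleton M ↔
      ∀ (ℓ : ℕ) [Fact ℓ.Prime], ℓ ≠ p →
        Subsingleton
          (TensorProduct ℤ M (WittVector ℓ (AlgebraicClosure (ZMod ℓ)))) := by
  constructor
  · intro hM ℓ _ _
    exact subsingleton_tensor_left
  · intro h
    by_contra hns
    rw [not_subsingleton_iff_nontrivial] at hns
    obtain ⟨x, hx⟩ := exists_ne (0 : M)
    by_cases hord : addOrderOf x = 0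
    · -- `x` has infinite order
      obtain ⟨ℓ, hℓge, hℓprime⟩ := Nat.exists_infinite_primes (p + 1)
      haveI : Fact ℓ.Prime := ⟨hℓprime⟩
      have hℓne : ℓ ≠ p := by omega
      haveI := h ℓ hℓne
      set k := AlgebraicClosure (ZMod ℓ)
      set W := WittVector ℓ k with hWdef
      haveI : Module.Flat ℤ W := witt_flat ℓ k
      set f : ℤ →ₗ[ℤ] M := (zmultiplesHom M x).toIntLinearMap with hf
      have hfinj : Function.Injective f := by
        intro a b hab
        by_contra hne
        have hsub : (a - b) • x = 0 := by
          have : a • x = b • x := hab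
          rw [sub_smul, this, sub_self]
        have : IsOfFinAddOrder x := by
          rw [isOfFinAddOrder_iff_zsmul_eq_zero]
          exact ⟨a - b, sub_ne_zero.mpr hne, hsub⟩
        rw [← addOrderOf_pos_iff] at this
        omega
      have hTinj := Module.Flat.rTensor_preserves_injective_linearMap (M := W) f hfinj
      haveI : Subsingleton (ℤ ⊗[ℤ] W) := ⟨fun a b => hTinj (Subsingleton.elim _ _)⟩
      have h10 : ((1 : ℤ) ⊗ₜ[ℤ] (1 : W)) = (0 : ℤ ⊗[ℤ] W) := Subsingleton.elim _ _
      have := congrArg (TensorProduct.lid ℤ W) h10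
      simp only [TensorProduct.lid_tmul, one_smul, map_zero] at this
      exact one_ne_zero this
    · -- `x` has finite order `n ≥ 2`
      set n := addOrderOf x with hn
      have hn1 : n ≠ 1 := by
        intro h1
        exact hx (AddMonoid.addOrderOf_eq_one_iff.mp h1)
      have hn2 : 2 ≤ n := by omega
      -- `p` does not divide `n`
      have hpn : ¬ p ∣ n := by
        intro hdvd
        have hz : p • ((n / p) • x) = 0 := by
          rw [smul_smul, Nat.mul_div_cancel' hdvd]
          exact addOrderOf_nsmul_eq_zero x
        have h0 : (n / p) • x = 0 := hdiv.1 (by simpa using hz)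
        have hddd : n ∣ n / p := (addOrderOf_dvd_iff_nsmul_eq_zero).mpr h0
        have hple : p ≤ n := Nat.le_of_dvd (by omega) hdvd
        have hlt : n / p < n := Nat.div_lt_self (by omega) hp.one_lt
        rcases Nat.eq_zero_or_pos (n / p) with hz2 | hz2
        · have := ((Nat.div_eq_zero_iff).mp hz2).resolve_left hp.pos.ne'
          omega
        · exact absurd (Nat.le_of_dvd hz2 hddd) (by omega)
      set q := n.minFac with hqdef
      have hqprime : q.Prime := Nat.minFac_prime hn1
      haveI : Fact q.Prime := ⟨hqprime⟩
      have hqdvd : q ∣ n := Nat.minFac_dvd n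
      have hqne : q ≠ p := fun hqp => hpn (hqp ▸ hqdvd)
      haveI := h q hqne
      set k := AlgebraicClosure (ZMod q)
      set W := WittVector q k with hWdef
      haveI : Module.Flat ℤ W := witt_flat q k
      -- the element `y = (n/q) • x` has exact order `q`
      set y : M := (n / q) • x with hy
      have hqy : q • y = 0 := by
        rw [hy, smul_smul, Nat.mul_div_cancel' hqdvd]
        exact addOrderOf_nsmul_eq_zero x
      have hyne : y ≠ 0 := by
        intro h0
        have hddd : n ∣ n / q := (addOrderOf_dvd_iff_nsmul_eq_zero).mpr (hy ▸ h0)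
        have hqle : q ≤ n := Nat.le_of_dvd (by omega) hqdvd
        have hlt : n / q < n := Nat.div_lt_self (by omega) hqprime.one_lt
        rcases Nat.eq_zero_or_pos (n / q) with hz | hz
        · have := ((Nat.div_eq_zero_iff).mp hz).resolve_left hqprime.pos.ne'
          omega
        · exact absurd (Nat.le_of_dvd hz hddd) (by omega)
      have hoy : addOrderOf y = q := by
        have hdvd : addOrderOf y ∣ q := addOrderOf_dvd_iff_nsmul_eq_zero.mpr hqy
        rcases (Nat.Prime.eq_one_or_self_of_dvd hqprime _ hdvd) with h1 | h1
        · exact absurd (AddMonoid.addOrderOf_eq_one_iff.mp h1) hyne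
        · exact h1
      -- build an injective linear map `ZMod q →ₗ[ℤ] M`
      have hgq : (zmultiplesHom M y) ((q : ℕ) : ℤ) = 0 := by
        simp only [zmultiplesHom_apply, natCast_zsmul]
        exact hqy
      set f0 : ZMod q →+ M := ZMod.lift q ⟨zmultiplesHom M y, hgq⟩ with hf0
      set f : ZMod q →ₗ[ℤ] M := f0.toIntLinearMap with hf
      have hfinj : Function.Injective f := by
        have hker : ∀ a : ZMod q, f a = 0 → a = 0 := by
          intro a ha
          have hval : ((a.val : ℤ) : ZMod q) = a := by
            rw [Int.cast_natCast]
            exact ZMod.natCast_rightInverse a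
          have : f0 (((a.val : ℤ) : ZMod q)) = 0 := by rw [hval]; exact ha
          rw [hf0, ZMod.lift_coe] at this
          simp only [zmultiplesHom_apply, natCast_zsmul] at this
          have hdvd : addOrderOf y ∣ a.val := addOrderOf_dvd_iff_nsmul_eq_zero.mpr this
          rw [hoy] at hdvd
          have hlt : a.val < q := ZMod.val_lt a
          have : a.val = 0 := Nat.eq_zero_of_dvd_of_lt hdvd hlt
          rw [← hval, this]
          simp
        intro a b hab
        have : f (a - b) = 0 := by rw [map_sub, hab, sub_self]
        have := hker _ this
        rwa [sub_eq_zero] at this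
      have hTinj := Module.Flat.rTensor_preserves_injective_linearMap (M := W) f hfinj
      haveI : Subsingleton ((ZMod q) ⊗[ℤ] W) := ⟨fun a b => hTinj (Subsingleton.elim _ _)⟩
      -- but `ZMod q ⊗ W` is nontrivial: map it onto `k`
      set c1 : ZMod q →+* k := algebraMap (ZMod q) k with hc1
      set c2 : W →+* k := WittVector.constantCoeff with hc2
      set B : ZMod q →ₗ[ℤ] W →ₗ[ℤ] k :=
        LinearMap.mk₂ ℤ (fun a w => c1 a * c2 w)
          (fun a a' w => by simp only [map_add, add_mul])
          (fun m a w => by simp only [map_zsmul, smul_mul_assoc])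
          (fun a w w' => by simp only [map_add, mul_add])
          (fun m a w => by simp only [map_zsmul, mul_smul_comm]) with hB
      have h10 : ((1 : ZMod q) ⊗ₜ[ℤ] (1 : W)) = (0 : (ZMod q) ⊗[ℤ] W) := Subsingleton.elim _ _
      have := congrArg (TensorProduct.lift B) h10
      rw [TensorProduct.lift.tmul, map_zero] at this
      simp only [hB, LinearMap.mk₂_apply, map_one, one_mul] at this
      exact one_ne_zero this
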